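/- With the metric g₁₁ = (r₀x⁴ - y²(x⁴+x²+1))/(x²y² - r₀x² + r₀)², g₁₂ = -xy/(x²y² - r₀x² + r₀)², g₂₂ = x²(x²-1)/(x²y² - r₀x² + r₀)², the Gaussian curvature is constant and equal to -r₀ at every point where the metric is defined and nondegenerate. -/

import Mathlib

open Filter

private lemma hasDerivAt_of_eq' {f g : ℝ → ℝ} {v w t : ℝ} (h : HasDerivAt f v t)
    (hfg : ∀ s, f s = g s) (hvw : v = w) : HasDerivAt g w t := by
  rw [show g = f from funext fun s => (hfg s).symm, ← hvw]; exact h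

private lemma P4' (a b c d e t : ℝ) :
    HasDerivAt (fun s : ℝ => a*s^4 + b*s^3 + c*s^2 + d*s + e)
      (4*a*t^3 + 3*b*t^2 + 2*c*t + d) t := by
  have h4 := (hasDerivAt_pow 4 t).const_mul a
  have h3 := (hasDerivAt_pow 3 t).const_mul b
  have h2 := (hasDerivAt_pow 2 t).const_mul c
  have h1 := (hasDerivAt_id t).const_mul d
  have h0 := hasDerivAt_const t e
  refine ((((h4.add h3).add h2).add h1).add h0).congr_deriv ?_
  push_cast; ring

private lemma keyD2' {p q : ℝ → ℝ} {p' q' t : ℝ} (hp : HasDerivAt p p' t)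
    (hq : HasDerivAt q q' t) (h : q t ≠ 0) :
    HasDerivAt (fun s => p s / q s ^ 2) ((p' * q t - 2 * p t * q') / q t ^ 3) t := by
  have h2 := hp.div (hq.pow 2) (pow_ne_zero 2 h)
  refine h2.congr_deriv ?_
  simp only [Pi.pow_apply]
  field_simp
  ring

private lemma keyD3' {p q : ℝ → ℝ} {p' q' t : ℝ} (hp : HasDerivAt p p' t)
    (hq : HasDerivAt q q' t) (h : q t ≠ 0) :
    HasDerivAt (fun s => p s / q s ^ 3) ((p' * q t - 3 * p t * q') / q t ^ 4) t := by
  have h2 := hp.div (hq.pow 3) (pow_ne_zero 3 h)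
  refine h2.congr_deriv ?_
  simp only [Pi.pow_apply]
  field_simp
  ring

set_option maxHeartbeats 4000000 in
theorem stmt_13 (r₀ : ℝ) (E F G : ℝ → ℝ → ℝ)
    (hE : ∀ x y, E x y = (r₀ * x ^ 4 - y ^ 2 * (x ^ 4 + x ^ 2 + 1))
            / (x ^ 2 * y ^ 2 - r₀ * x ^ 2 + r₀) ^ 2)
    (hF : ∀ x y, F x y = -(x * y) / (x ^ 2 * y ^ 2 - r₀ * x ^ 2 + r₀) ^ 2)
    (hG : ∀ x y, G x y = x ^ 2 * (x ^ 2 - 1)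
            / (x ^ 2 * y ^ 2 - r₀ * x ^ 2 + r₀) ^ 2) :
    ∀ x y : ℝ, x ^ 2 * y ^ 2 - r₀ * x ^ 2 + r₀ ≠ 0 →
      E x y * G x y - (F x y) ^ 2 ≠ 0 →
      ( (Matrix.det !![
          -(1/2) * deriv (deriv (fun s => E x s)) y
            + deriv (fun t => deriv (fun s => F t s) y) x
            - (1/2) * deriv (deriv (fun t => G t y)) x,
          (1/2) * deriv (fun t => E t y) x,
          deriv (fun t => F t y) x - (1/2) * deriv (fun s => E x s) y;
          deriv (fun s => F x s) y - (1/2) * deriv (fun t => G t y) x,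
          E x y, F x y;
          (1/2) * deriv (fun s => G x s) y, F x y, G x y]
        - Matrix.det !![
          0, (1/2) * deriv (fun s => E x s) y, (1/2) * deriv (fun t => G t y) x;
          (1/2) * deriv (fun s => E x s) y, E x y, F x y;
          (1/2) * deriv (fun t => G t y) x, F x y, G x y])
        / (E x y * G x y - (F x y) ^ 2) ^ 2 ) = -r₀ := by
  intro x y hD hdet
  -- derivatives of the denominator in each variable
  have hqy : ∀ s : ℝ, HasDerivAt (fun s => x ^ 2 * s ^ 2 - r₀ * x ^ 2 + r₀)
      (2 * x ^ 2 * s) s := fun s =>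
    hasDerivAt_of_eq' (P4' 0 0 (x ^ 2) 0 (-(r₀ * x ^ 2) + r₀) s) (fun u => by ring) (by ring)
  have hqx : ∀ t : ℝ, HasDerivAt (fun t => t ^ 2 * y ^ 2 - r₀ * t ^ 2 + r₀)
      (2 * t * y ^ 2 - 2 * r₀ * t) t := fun t =>
    hasDerivAt_of_eq' (P4' 0 0 (y ^ 2 - r₀) 0 r₀ t) (fun u => by ring) (by ring)
  -- numerator derivatives
  have hnE1 : ∀ s : ℝ, HasDerivAt (fun s => r₀ * x ^ 4 - s ^ 2 * (x ^ 4 + x ^ 2 + 1))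
      (-2 * s * (x ^ 4 + x ^ 2 + 1)) s := fun s =>
    hasDerivAt_of_eq' (P4' 0 0 (-(x ^ 4 + x ^ 2 + 1)) 0 (r₀ * x ^ 4) s)
      (fun u => by ring) (by ring)
  have hnF1 : ∀ s : ℝ, HasDerivAt (fun s => -(x * s)) (-x) s := fun s =>
    hasDerivAt_of_eq' (P4' 0 0 0 (-x) 0 s) (fun u => by ring) (by ring)
  have hnG1 : ∀ s : ℝ, HasDerivAt (fun _ : ℝ => x ^ 2 * (x ^ 2 - 1)) 0 s := fun s =>
    hasDerivAt_const s _
  have hnE2 : ∀ t : ℝ, HasDerivAt (fun t => r₀ * t ^ 4 - y ^ 2 * (t ^ 4 + t ^ 2 + 1))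
      (4 * r₀ * t ^ 3 - y ^ 2 * (4 * t ^ 3 + 2 * t)) t := fun t =>
    hasDerivAt_of_eq' (P4' (r₀ - y ^ 2) 0 (-y ^ 2) 0 (-y ^ 2) t) (fun u => by ring) (by ring)
  have hnF2 : ∀ t : ℝ, HasDerivAt (fun t => -(t * y)) (-y) t := fun t =>
    hasDerivAt_of_eq' (P4' 0 0 0 (-y) 0 t) (fun u => by ring) (by ring)
  have hnG2 : ∀ t : ℝ, HasDerivAt (fun t => t ^ 2 * (t ^ 2 - 1)) (4 * t ^ 3 - 2 * t) t :=
    fun t => hasDerivAt_of_eq' (P4' 1 0 (-1) 0 0 t) (fun u => by ring) (by ring)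
  -- eventual nonvanishing of the denominator
  have hev1 : ∀ᶠ s in nhds y, x ^ 2 * s ^ 2 - r₀ * x ^ 2 + r₀ ≠ 0 := by
    have hc : ContinuousAt (fun s : ℝ => x ^ 2 * s ^ 2 - r₀ * x ^ 2 + r₀) y := by fun_prop
    exact hc.eventually_ne hD
  have hev2 : ∀ᶠ t in nhds x, t ^ 2 * y ^ 2 - r₀ * t ^ 2 + r₀ ≠ 0 := by
    have hc : ContinuousAt (fun t : ℝ => t ^ 2 * y ^ 2 - r₀ * t ^ 2 + r₀) x := by fun_prop
    exact hc.eventually_ne hD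
  -- first derivatives
  have hEx : deriv (fun t => E t y) x =
      ((4 * r₀ * x ^ 3 - y ^ 2 * (4 * x ^ 3 + 2 * x)) * (x ^ 2 * y ^ 2 - r₀ * x ^ 2 + r₀)
        - 2 * (r₀ * x ^ 4 - y ^ 2 * (x ^ 4 + x ^ 2 + 1)) * (2 * x * y ^ 2 - 2 * r₀ * x))
        / (x ^ 2 * y ^ 2 - r₀ * x ^ 2 + r₀) ^ 3 := by
    rw [show (fun t => E t y) = fun t => (r₀ * t ^ 4 - y ^ 2 * (t ^ 4 + t ^ 2 + 1))
        / (t ^ 2 * y ^ 2 - r₀ * t ^ 2 + r₀) ^ 2 from funext fun t => hE t y]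
    exact (keyD2' (hnE2 x) (hqx x) hD).deriv
  have hFx : deriv (fun t => F t y) x =
      ((-y) * (x ^ 2 * y ^ 2 - r₀ * x ^ 2 + r₀)
        - 2 * (-(x * y)) * (2 * x * y ^ 2 - 2 * r₀ * x))
        / (x ^ 2 * y ^ 2 - r₀ * x ^ 2 + r₀) ^ 3 := by
    rw [show (fun t => F t y) = fun t => -(t * y)
        / (t ^ 2 * y ^ 2 - r₀ * t ^ 2 + r₀) ^ 2 from funext fun t => hF t y]
    exact (keyD2' (hnF2 x) (hqx x) hD).deriv
  have hGx : deriv (fun t => G t y) x =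
      ((4 * x ^ 3 - 2 * x) * (x ^ 2 * y ^ 2 - r₀ * x ^ 2 + r₀)
        - 2 * (x ^ 2 * (x ^ 2 - 1)) * (2 * x * y ^ 2 - 2 * r₀ * x))
        / (x ^ 2 * y ^ 2 - r₀ * x ^ 2 + r₀) ^ 3 := by
    rw [show (fun t => G t y) = fun t => t ^ 2 * (t ^ 2 - 1)
        / (t ^ 2 * y ^ 2 - r₀ * t ^ 2 + r₀) ^ 2 from funext fun t => hG t y]
    exact (keyD2' (hnG2 x) (hqx x) hD).deriv
  have hEy : deriv (fun s => E x s) y =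
      ((-2 * y * (x ^ 4 + x ^ 2 + 1)) * (x ^ 2 * y ^ 2 - r₀ * x ^ 2 + r₀)
        - 2 * (r₀ * x ^ 4 - y ^ 2 * (x ^ 4 + x ^ 2 + 1)) * (2 * x ^ 2 * y))
        / (x ^ 2 * y ^ 2 - r₀ * x ^ 2 + r₀) ^ 3 := by
    rw [show (fun s => E x s) = fun s => (r₀ * x ^ 4 - s ^ 2 * (x ^ 4 + x ^ 2 + 1))
        / (x ^ 2 * s ^ 2 - r₀ * x ^ 2 + r₀) ^ 2 from funext fun s => hE x s]
    exact (keyD2' (hnE1 y) (hqy y) hD).deriv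
  have hFy : deriv (fun s => F x s) y =
      ((-x) * (x ^ 2 * y ^ 2 - r₀ * x ^ 2 + r₀)
        - 2 * (-(x * y)) * (2 * x ^ 2 * y))
        / (x ^ 2 * y ^ 2 - r₀ * x ^ 2 + r₀) ^ 3 := by
    rw [show (fun s => F x s) = fun s => -(x * s)
        / (x ^ 2 * s ^ 2 - r₀ * x ^ 2 + r₀) ^ 2 from funext fun s => hF x s]
    exact (keyD2' (hnF1 y) (hqy y) hD).deriv
  have hGy : deriv (fun s => G x s) y =
      (0 * (x ^ 2 * y ^ 2 - r₀ * x ^ 2 + r₀)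
        - 2 * (x ^ 2 * (x ^ 2 - 1)) * (2 * x ^ 2 * y))
        / (x ^ 2 * y ^ 2 - r₀ * x ^ 2 + r₀) ^ 3 := by
    rw [show (fun s => G x s) = fun s => x ^ 2 * (x ^ 2 - 1)
        / (x ^ 2 * s ^ 2 - r₀ * x ^ 2 + r₀) ^ 2 from funext fun s => hG x s]
    exact (keyD2' (hnG1 y) (hqy y) hD).deriv
  -- second derivatives
  have hEyy : deriv (deriv (fun s => E x s)) y =
      ((6 * (x ^ 4 + x ^ 2 + 1) * x ^ 2 * y ^ 2 + 2 * (x ^ 4 + x ^ 2 + 1) * r₀ * x ^ 2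
          - 2 * (x ^ 4 + x ^ 2 + 1) * r₀ - 4 * r₀ * x ^ 6) * (x ^ 2 * y ^ 2 - r₀ * x ^ 2 + r₀)
        - 3 * ((-2 * y * (x ^ 4 + x ^ 2 + 1)) * (x ^ 2 * y ^ 2 - r₀ * x ^ 2 + r₀)
          - 2 * (r₀ * x ^ 4 - y ^ 2 * (x ^ 4 + x ^ 2 + 1)) * (2 * x ^ 2 * y)) * (2 * x ^ 2 * y))
        / (x ^ 2 * y ^ 2 - r₀ * x ^ 2 + r₀) ^ 4 := by
    have heq : deriv (fun s => E x s) =ᶠ[nhds y] fun s =>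
        ((-2 * s * (x ^ 4 + x ^ 2 + 1)) * (x ^ 2 * s ^ 2 - r₀ * x ^ 2 + r₀)
          - 2 * (r₀ * x ^ 4 - s ^ 2 * (x ^ 4 + x ^ 2 + 1)) * (2 * x ^ 2 * s))
          / (x ^ 2 * s ^ 2 - r₀ * x ^ 2 + r₀) ^ 3 := by
      filter_upwards [hev1] with s hs
      rw [show (fun s' => E x s') = fun s' => (r₀ * x ^ 4 - s' ^ 2 * (x ^ 4 + x ^ 2 + 1))
          / (x ^ 2 * s' ^ 2 - r₀ * x ^ 2 + r₀) ^ 2 from funext fun s' => hE x s']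
      exact (keyD2' (hnE1 s) (hqy s) hs).deriv
    rw [heq.deriv_eq]
    have hP : HasDerivAt (fun s =>
        (-2 * s * (x ^ 4 + x ^ 2 + 1)) * (x ^ 2 * s ^ 2 - r₀ * x ^ 2 + r₀)
          - 2 * (r₀ * x ^ 4 - s ^ 2 * (x ^ 4 + x ^ 2 + 1)) * (2 * x ^ 2 * s))
        (6 * (x ^ 4 + x ^ 2 + 1) * x ^ 2 * y ^ 2 + 2 * (x ^ 4 + x ^ 2 + 1) * r₀ * x ^ 2
          - 2 * (x ^ 4 + x ^ 2 + 1) * r₀ - 4 * r₀ * x ^ 6) y :=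
      hasDerivAt_of_eq' (P4' 0 (2 * (x ^ 4 + x ^ 2 + 1) * x ^ 2) 0
        (2 * (x ^ 4 + x ^ 2 + 1) * r₀ * x ^ 2 - 2 * (x ^ 4 + x ^ 2 + 1) * r₀ - 4 * r₀ * x ^ 6) 0 y)
        (fun u => by ring) (by ring)
    exact (keyD3' hP (hqy y) hD).deriv
  have hGxx : deriv (deriv (fun t => G t y)) x =
      ((6 * r₀ * x ^ 2 + 6 * x ^ 2 * y ^ 2 - 2 * r₀) * (x ^ 2 * y ^ 2 - r₀ * x ^ 2 + r₀)
        - 3 * ((4 * x ^ 3 - 2 * x) * (x ^ 2 * y ^ 2 - r₀ * x ^ 2 + r₀)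
          - 2 * (x ^ 2 * (x ^ 2 - 1)) * (2 * x * y ^ 2 - 2 * r₀ * x))
          * (2 * x * y ^ 2 - 2 * r₀ * x))
        / (x ^ 2 * y ^ 2 - r₀ * x ^ 2 + r₀) ^ 4 := by
    have heq : deriv (fun t => G t y) =ᶠ[nhds x] fun t =>
        ((4 * t ^ 3 - 2 * t) * (t ^ 2 * y ^ 2 - r₀ * t ^ 2 + r₀)
          - 2 * (t ^ 2 * (t ^ 2 - 1)) * (2 * t * y ^ 2 - 2 * r₀ * t))
          / (t ^ 2 * y ^ 2 - r₀ * t ^ 2 + r₀) ^ 3 := by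
      filter_upwards [hev2] with t ht
      rw [show (fun t' => G t' y) = fun t' => t' ^ 2 * (t' ^ 2 - 1)
          / (t' ^ 2 * y ^ 2 - r₀ * t' ^ 2 + r₀) ^ 2 from funext fun t' => hG t' y]
      exact (keyD2' (hnG2 t) (hqx t) ht).deriv
    rw [heq.deriv_eq]
    have hP : HasDerivAt (fun t =>
        (4 * t ^ 3 - 2 * t) * (t ^ 2 * y ^ 2 - r₀ * t ^ 2 + r₀)
          - 2 * (t ^ 2 * (t ^ 2 - 1)) * (2 * t * y ^ 2 - 2 * r₀ * t))
        (6 * r₀ * x ^ 2 + 6 * x ^ 2 * y ^ 2 - 2 * r₀) x :=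
      hasDerivAt_of_eq' (P4' 0 (2 * r₀ + 2 * y ^ 2) 0 (-(2 * r₀)) 0 x)
        (fun u => by ring) (by ring)
    exact (keyD3' hP (hqx x) hD).deriv
  have hFxy : deriv (fun t => deriv (fun s => F t s) y) x =
      ((9 * x ^ 2 * y ^ 2 + 3 * r₀ * x ^ 2 - r₀) * (x ^ 2 * y ^ 2 - r₀ * x ^ 2 + r₀)
        - 3 * ((-x) * (x ^ 2 * y ^ 2 - r₀ * x ^ 2 + r₀)
          - 2 * (-(x * y)) * (2 * x ^ 2 * y)) * (2 * x * y ^ 2 - 2 * r₀ * x))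
        / (x ^ 2 * y ^ 2 - r₀ * x ^ 2 + r₀) ^ 4 := by
    have heq : (fun t => deriv (fun s => F t s) y) =ᶠ[nhds x] fun t =>
        ((-t) * (t ^ 2 * y ^ 2 - r₀ * t ^ 2 + r₀)
          - 2 * (-(t * y)) * (2 * t ^ 2 * y))
          / (t ^ 2 * y ^ 2 - r₀ * t ^ 2 + r₀) ^ 3 := by
      filter_upwards [hev2] with t ht
      have hp : HasDerivAt (fun s : ℝ => -(t * s)) (-t) y :=
        hasDerivAt_of_eq' (P4' 0 0 0 (-t) 0 y) (fun u => by ring) (by ring)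
      have hq : HasDerivAt (fun s : ℝ => t ^ 2 * s ^ 2 - r₀ * t ^ 2 + r₀)
          (2 * t ^ 2 * y) y :=
        hasDerivAt_of_eq' (P4' 0 0 (t ^ 2) 0 (-(r₀ * t ^ 2) + r₀) y)
          (fun u => by ring) (by ring)
      rw [show (fun s => F t s) = fun s => -(t * s)
          / (t ^ 2 * s ^ 2 - r₀ * t ^ 2 + r₀) ^ 2 from funext fun s => hF t s]
      exact (keyD2' hp hq ht).deriv
    rw [heq.deriv_eq]
    have hP : HasDerivAt (fun t =>
        (-t) * (t ^ 2 * y ^ 2 - r₀ * t ^ 2 + r₀) - 2 * (-(t * y)) * (2 * t ^ 2 * y))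
        (9 * x ^ 2 * y ^ 2 + 3 * r₀ * x ^ 2 - r₀) x :=
      hasDerivAt_of_eq' (P4' 0 (3 * y ^ 2 + r₀) 0 (-r₀) 0 x) (fun u => by ring) (by ring)
    exact (keyD3' hP (hqx x) hD).deriv
  -- the determinant of the metric
  have hkey : E x y * G x y - F x y ^ 2 =
      ((r₀ * x ^ 4 - y ^ 2 * (x ^ 4 + x ^ 2 + 1)) * (x ^ 2 * (x ^ 2 - 1)) - x ^ 2 * y ^ 2)
        / (x ^ 2 * y ^ 2 - r₀ * x ^ 2 + r₀) ^ 4 := by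
    rw [hE x y, hF x y, hG x y]
    field_simp
  have hdet' : (r₀ * x ^ 4 - y ^ 2 * (x ^ 4 + x ^ 2 + 1)) * (x ^ 2 * (x ^ 2 - 1))
      - x ^ 2 * y ^ 2 ≠ 0 := by
    intro h0
    exact hdet (by rw [hkey, h0, zero_div])
  have hq : ((r₀ * x ^ 4 - y ^ 2 * (x ^ 4 + x ^ 2 + 1)) * (x ^ 2 * (x ^ 2 - 1)) - x ^ 2 * y ^ 2)
      / (x ^ 2 * y ^ 2 - r₀ * x ^ 2 + r₀) ^ 4 ≠ 0 := hkey ▸ hdet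
  rw [hEyy, hFxy, hGxx, hEx, hFx, hGx, hEy, hFy, hGy, hkey, hE x y, hF x y, hG x y]
  simp only [Matrix.det_fin_three, Matrix.cons_val', Matrix.cons_val_zero, Matrix.cons_val_one,
    Matrix.head_cons, Matrix.empty_val', Matrix.cons_val_fin_one, Matrix.head_fin_const,
    Matrix.cons_val_two, Matrix.tail_cons, Matrix.of_apply, Fin.isValue]
  rw [div_eq_iff (pow_ne_zero 2 hq)]
  simp only [div_eq_mul_inv, ← inv_pow]
  ring
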